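/- (Flat helical groups.) Let θ₀ ∈ [0,2π), τ₀ ≠ 0 and n ≥ 1 be the parameters of a discrete helical lattice H₀ with reciprocal lattice H₀'. Then the following three statements are equivalent: (1) (2, 0) ∈ H₀'; (2) (θ₀ = 0 or θ₀ = π) and (n = 1 or n = 2); (3) for every x₀ ∈ ℝ³ there exists a 2-dimensional affine subspace of ℝ³ containing the orbit {R_θ x₀ + τ e₃ : (θ, τ) ∈ H₀}. -/

import Mathlib

noncomputable section

open Real

/-- Reduction of a real number modulo 2π into [0, 2π). -/
def mod2pi (x : ℝ) : ℝ := x - 2*Real.pi * ⌊x / (2*Real.pi)⌋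

/-- The discrete helical lattice with parameters θ₀, τ₀, n:
`H₀ = {((2πi/n + θ₀ j) mod 2π, τ₀ j) : i ∈ {0,…,n−1}, j ∈ ℤ} ⊂ [0,2π) × ℝ`. -/
def helLat (θ₀ τ₀ : ℝ) (n : ℕ) : Set (ℝ × ℝ) :=
  {p | ∃ i j : ℤ, 0 ≤ i ∧ i < (n : ℤ) ∧
    p = (mod2pi (2*Real.pi*i/n + θ₀*j), τ₀*j)}

/-- The reciprocal helical lattice:
`H₀' = {(α,β) ∈ ℤ × ℝ : αθ + βτ ∈ 2πℤ for all (θ,τ) ∈ H₀}`. -/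
def helRec (θ₀ τ₀ : ℝ) (n : ℕ) : Set (ℤ × ℝ) :=
  {q | ∀ p ∈ helLat θ₀ τ₀ n, ∃ m : ℤ, (q.1 : ℝ) * p.1 + q.2 * p.2 = 2*Real.pi*m}

abbrev V3 : Type := Fin 3 → ℝ

/-- Rotation by angle `θ` about the `e₃` axis. -/
def Rot (θ : ℝ) : Matrix (Fin 3) (Fin 3) ℝ :=
  !![Real.cos θ, -Real.sin θ, 0; Real.sin θ, Real.cos θ, 0; 0, 0, 1]

lemma cos_mod2pi (x : ℝ) : Real.cos (mod2pi x) = Real.cos x := by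
  have h : mod2pi x = -((⌊x / (2*Real.pi)⌋ : ℝ) * (2*Real.pi) - x) := by unfold mod2pi; ring
  rw [h, Real.cos_neg, Real.cos_int_mul_two_pi_sub]

lemma sin_mod2pi (x : ℝ) : Real.sin (mod2pi x) = Real.sin x := by
  have h : mod2pi x = -((⌊x / (2*Real.pi)⌋ : ℝ) * (2*Real.pi) - x) := by unfold mod2pi; ring
  rw [h, Real.sin_neg, Real.sin_int_mul_two_pi_sub, neg_neg]

lemma mod2pi_mem (x : ℝ) : mod2pi x ∈ Set.Ico 0 (2*Real.pi) := by
  have h2 : (0:ℝ) < 2*Real.pi := by positivity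
  have h1 := Int.sub_floor_div_mul_nonneg x h2
  have h3 := Int.sub_floor_div_mul_lt x h2
  constructor
  · unfold mod2pi; linarith
  · unfold mod2pi; linarith

lemma two_mod2pi_iff (x : ℝ) :
    (∃ m : ℤ, 2 * mod2pi x = 2*Real.pi*m) ↔ (∃ k : ℤ, x = Real.pi * k) := by
  constructor
  · rintro ⟨m, hm⟩
    refine ⟨m + 2*⌊x / (2*Real.pi)⌋, ?_⟩
    unfold mod2pi at hm; push_cast; push_cast at hm; linarith
  · rintro ⟨k, hk⟩
    refine ⟨k - 2*⌊x / (2*Real.pi)⌋, ?_⟩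
    unfold mod2pi; push_cast; linarith

lemma mod2pi_eq_zero_or_pi {x : ℝ} (h : ∃ k : ℤ, x = Real.pi * k) :
    mod2pi x = 0 ∨ mod2pi x = Real.pi := by
  obtain ⟨k, hk⟩ := h
  set f := ⌊x / (2*Real.pi)⌋ with hf
  have hx : mod2pi x = Real.pi * (k - 2*f) := by unfold mod2pi; push_cast; linarith [hk]
  have hπ := Real.pi_pos
  have hmem := mod2pi_mem x
  have h0 : (0:ℝ) ≤ Real.pi * (k - 2*f) := hx ▸ hmem.1
  have h1 : Real.pi * ((k:ℝ) - 2*f) < Real.pi * 2 := by rw [← hx]; linarith [hmem.2]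
  have hk0 : (0:ℝ) ≤ (k:ℝ) - 2*f := nonneg_of_mul_nonneg_right h0 hπ
  have hk1 : ((k:ℝ) - 2*f) < 2 := lt_of_mul_lt_mul_left h1 (le_of_lt hπ)
  have hk0' : (0:ℤ) ≤ k - 2*f := by exact_mod_cast hk0
  have hk1' : k - 2*f < 2 := by exact_mod_cast hk1
  have hor : k - 2*f = 0 ∨ k - 2*f = 1 := by omega
  rcases hor with h|h
  · left; rw [hx]; have h' : ((k:ℝ) - 2*f) = 0 := by exact_mod_cast h
    rw [h']; ring
  · right; rw [hx]; have h' : ((k:ℝ) - 2*f) = 1 := by exact_mod_cast h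
    rw [h']; ring

lemma angle_int (θ₀ : ℝ) (hθ : θ₀ = 0 ∨ θ₀ = Real.pi) {n : ℕ} (hn : n = 1 ∨ n = 2)
    (i j : ℤ) : ∃ k : ℤ, 2*Real.pi*i/n + θ₀*j = Real.pi*k := by
  rcases hθ with rfl|rfl <;> rcases hn with rfl|rfl
  · exact ⟨2*i, by push_cast; ring⟩
  · exact ⟨i, by push_cast; ring⟩
  · exact ⟨2*i + j, by push_cast; ring⟩
  · exact ⟨i + j, by push_cast; ring⟩

lemma rot_apply (θ : ℝ) (x : V3) :
    (Rot θ).mulVec x = ![Real.cos θ * x 0 - Real.sin θ * x 1,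
      Real.sin θ * x 0 + Real.cos θ * x 1, x 2] := by
  funext i
  fin_cases i <;>
    simp [Rot, Matrix.mulVec, dotProduct, Fin.sum_univ_three] <;> ring

lemma not_flat {S : AffineSubspace ℝ V3} (h2 : Module.finrank ℝ S.direction = 2)
    {p : V3} (v : Fin 3 → V3) (hp : p ∈ S) (hv : ∀ i, v i + p ∈ S)
    (hdet : (Matrix.of v).det ≠ 0) : False := by
  have : FiniteDimensional ℝ S.direction := Module.finite_of_finrank_eq_succ h2
  have hli : LinearIndependent ℝ v :=
    Matrix.linearIndependent_rows_iff_isUnit.2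
      ((Matrix.isUnit_iff_isUnit_det _).2 (isUnit_iff_ne_zero.2 hdet))
  have hmem : ∀ i, v i ∈ S.direction := by
    intro i
    have := AffineSubspace.vsub_mem_direction (hv i) hp
    simpa [vsub_eq_sub] using this
  set b : Fin 3 → S.direction := fun i => ⟨v i, hmem i⟩ with hb
  have hlib : LinearIndependent ℝ b := by
    apply LinearIndependent.of_comp S.direction.subtype
    exact hli
  have := hlib.fintype_card_le_finrank
  rw [h2, Fintype.card_fin] at this
  omega

lemma exists_flat (x₀ u : V3) (hu2 : u 2 = 0) (hu : ¬ (u 0 = 0 ∧ u 1 = 0))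
    (P : Set V3) (hP : ∀ q ∈ P, ∃ s t : ℝ, q = x₀ + (s • u + t • (![0,0,1] : V3))) :
    ∃ S : AffineSubspace ℝ V3, Module.finrank ℝ S.direction = 2 ∧ ∀ q ∈ P, q ∈ S := by
  refine ⟨AffineSubspace.mk' x₀ (Submodule.span ℝ (Set.range ![u, (![0,0,1] : V3)])), ?_, ?_⟩
  · rw [AffineSubspace.direction_mk']
    rw [finrank_span_eq_card ?_]
    · simp
    · rw [LinearIndependent.pair_iff]
      intro s t hst
      have h2 : t = 0 := by
        have := congrFun hst 2
        simpa [hu2] using this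
      subst h2
      have hs0 : s * u 0 = 0 := by have := congrFun hst 0; simpa using this
      have hs1 : s * u 1 = 0 := by have := congrFun hst 1; simpa using this
      constructor
      · rcases not_and_or.mp hu with h | h
        · rcases mul_eq_zero.mp hs0 with h' | h'
          · exact h'
          · exact absurd h' h
        · rcases mul_eq_zero.mp hs1 with h' | h'
          · exact h'
          · exact absurd h' h
      · rfl
  · intro q hq
    obtain ⟨s, t, rfl⟩ := hP q hq
    rw [AffineSubspace.mem_mk']
    have h : (x₀ + (s • u + t • (![0,0,1] : V3))) -ᵥ x₀ = s • u + t • (![0,0,1] : V3) := by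
      simp [vsub_eq_sub]
    rw [h]
    exact Submodule.add_mem _
      (Submodule.smul_mem _ _ (Submodule.subset_span ⟨0, rfl⟩))
      (Submodule.smul_mem _ _ (Submodule.subset_span ⟨1, rfl⟩))

lemma orbit_e1 (a τ : ℝ) :
    (Rot (mod2pi a)).mulVec ![1,0,0] + τ • (![0,0,1] : V3) = ![Real.cos a, Real.sin a, τ] := by
  rw [rot_apply]
  funext i
  fin_cases i <;> simp [cos_mod2pi, sin_mod2pi]

/-- **Flat helical groups.** The following are equivalent:
(1) `(2,0)` belongs to the reciprocal helical lattice;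
(2) `θ₀ ∈ {0, π}` and `n ∈ {1, 2}`;
(3) every orbit of the helical group lies in a 2-dimensional affine subspace. -/
theorem flat_helical_groups (θ₀ τ₀ : ℝ) (hθ₀ : θ₀ ∈ Set.Ico 0 (2*Real.pi)) (hτ₀ : τ₀ ≠ 0)
    (n : ℕ) (hn : 1 ≤ n) :
    ((((2 : ℤ), (0 : ℝ)) ∈ helRec θ₀ τ₀ n) ↔
      ((θ₀ = 0 ∨ θ₀ = Real.pi) ∧ (n = 1 ∨ n = 2))) ∧
    (((θ₀ = 0 ∨ θ₀ = Real.pi) ∧ (n = 1 ∨ n = 2)) ↔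
      (∀ x₀ : V3, ∃ S : AffineSubspace ℝ V3,
        Module.finrank ℝ S.direction = 2 ∧
        ∀ p ∈ helLat θ₀ τ₀ n,
          (Rot p.1).mulVec x₀ + p.2 • (![0,0,1] : V3) ∈ S)) := by
  have hπ := Real.pi_pos
  have hnR : (0:ℝ) < n := by exact_mod_cast hn
  constructor
  · constructor
    · -- (1) → (2)
      intro h
      have hθmem : ((mod2pi (2*Real.pi*((0:ℤ):ℝ)/n + θ₀*((1:ℤ):ℝ)), τ₀*((1:ℤ):ℝ)) : ℝ × ℝ)
          ∈ helLat θ₀ τ₀ n := ⟨0, 1, le_refl 0, by exact_mod_cast hn, rfl⟩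
      obtain ⟨m, hm⟩ := h _ hθmem
      simp only at hm
      have hsimp : 2*Real.pi*((0:ℤ):ℝ)/n + θ₀*((1:ℤ):ℝ) = θ₀ := by push_cast; ring
      rw [hsimp] at hm
      obtain ⟨k, hk⟩ := (two_mod2pi_iff θ₀).1 ⟨m, by push_cast at hm; linarith⟩
      have hk0 : (0:ℝ) ≤ (k:ℝ) := nonneg_of_mul_nonneg_right (hk ▸ hθ₀.1) hπ
      have hk2 : ((k:ℝ)) < 2 := by
        have h1 : Real.pi * (k:ℝ) < Real.pi * 2 := by rw [← hk]; linarith [hθ₀.2]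
        exact lt_of_mul_lt_mul_left h1 (le_of_lt hπ)
      have hkor : k = 0 ∨ k = 1 := by
        have h0 : (0:ℤ) ≤ k := by exact_mod_cast hk0
        have h2 : k < 2 := by exact_mod_cast hk2
        omega
      have hθor : θ₀ = 0 ∨ θ₀ = Real.pi := by
        rcases hkor with rfl|rfl
        · left; rw [hk]; norm_num
        · right; rw [hk]; norm_num
      refine ⟨hθor, ?_⟩
      by_cases hn1 : n = 1
      · exact Or.inl hn1
      have hn2 : 2 ≤ n := by omega
      have hnmem : ((mod2pi (2*Real.pi*((1:ℤ):ℝ)/n + θ₀*((0:ℤ):ℝ)), τ₀*((0:ℤ):ℝ)) : ℝ × ℝ)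
          ∈ helLat θ₀ τ₀ n := ⟨1, 0, by norm_num, by exact_mod_cast hn2, rfl⟩
      obtain ⟨m', hm'⟩ := h _ hnmem
      simp only at hm'
      have hsimp' : 2*Real.pi*((1:ℤ):ℝ)/n + θ₀*((0:ℤ):ℝ) = 2*Real.pi/n := by push_cast; ring
      rw [hsimp'] at hm'
      obtain ⟨k', hk'⟩ := (two_mod2pi_iff _).1 ⟨m', by push_cast at hm'; linarith⟩
      rw [div_eq_iff (ne_of_gt hnR)] at hk'
      have h2kn : (2:ℝ) = (k':ℝ) * n := by
        have hπne : Real.pi ≠ 0 := ne_of_gt hπ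
        apply mul_left_cancel₀ hπne
        ring_nf
        ring_nf at hk'
        linarith
      have h2kn' : (2:ℤ) = k' * n := by exact_mod_cast h2kn
      have hkpos : 0 < k' := by nlinarith [h2kn', hn2]
      have hle : (n:ℤ) ≤ 2 := by nlinarith [h2kn', hkpos]
      right; omega
    · -- (2) → (1)
      rintro ⟨hθ, hn12⟩ p hp
      obtain ⟨i, j, -, -, rfl⟩ := hp
      obtain ⟨m, hm⟩ := (two_mod2pi_iff _).2 (angle_int θ₀ hθ hn12 i j)
      exact ⟨m, by simp only; push_cast; linarith⟩
  · constructor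
    · -- (2) → (3)
      rintro ⟨hθ, hn12⟩ x₀
      by_cases hx : x₀ 0 = 0 ∧ x₀ 1 = 0
      · have hP : ∀ q ∈ {q | ∃ p ∈ helLat θ₀ τ₀ n,
            q = (Rot p.1).mulVec x₀ + p.2 • (![0,0,1] : V3)},
            ∃ s t : ℝ, q = x₀ + (s • (![1,0,0] : V3) + t • (![0,0,1] : V3)) := by
          rintro q ⟨p, hp, rfl⟩
          obtain ⟨i, j, -, -, rfl⟩ := hp
          simp only
          rcases mod2pi_eq_zero_or_pi (angle_int θ₀ hθ hn12 i j) with h0 | hp1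
          · refine ⟨0, τ₀*j, ?_⟩
            rw [h0, rot_apply]
            funext l
            fin_cases l <;> simp <;> try ring
          · refine ⟨0, τ₀*j, ?_⟩
            rw [hp1, rot_apply]
            funext l
            fin_cases l <;> simp [hx.1, hx.2] <;> try ring
        obtain ⟨S, hS, hmem⟩ := exists_flat x₀ ![1,0,0] (by rfl) (by norm_num) _ hP
        exact ⟨S, hS, fun p hp => hmem _ ⟨p, hp, rfl⟩⟩
      · have hP : ∀ q ∈ {q | ∃ p ∈ helLat θ₀ τ₀ n,
            q = (Rot p.1).mulVec x₀ + p.2 • (![0,0,1] : V3)},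
            ∃ s t : ℝ, q = x₀ + (s • (![x₀ 0, x₀ 1, 0] : V3) + t • (![0,0,1] : V3)) := by
          rintro q ⟨p, hp, rfl⟩
          obtain ⟨i, j, -, -, rfl⟩ := hp
          simp only
          rcases mod2pi_eq_zero_or_pi (angle_int θ₀ hθ hn12 i j) with h0 | hp1
          · refine ⟨0, τ₀*j, ?_⟩
            rw [h0, rot_apply]
            funext l
            fin_cases l <;> simp <;> try ring
          · refine ⟨-2, τ₀*j, ?_⟩
            rw [hp1, rot_apply]
            funext l
            fin_cases l <;> simp <;> try ring
        obtain ⟨S, hS, hmem⟩ := exists_flat x₀ ![x₀ 0, x₀ 1, 0] (by rfl)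
          (by simpa using hx) _ hP
        exact ⟨S, hS, fun p hp => hmem _ ⟨p, hp, rfl⟩⟩
    · -- (3) → (2)
      intro h3
      by_contra hcon
      obtain ⟨S, hS, hmem⟩ := h3 ![1,0,0]
      by_cases hθ : θ₀ = 0 ∨ θ₀ = Real.pi
      · -- then n ≥ 3
        have hn3 : 3 ≤ n := by
          rcases Nat.lt_or_ge n 3 with h | h
          · exfalso; exact hcon ⟨hθ, by omega⟩
          · exact h
        have hn3R : (3:ℝ) ≤ n := by exact_mod_cast hn3
        set a : ℝ := 2*Real.pi/n with ha
        have hqA : ∀ i : ℤ, 0 ≤ i → i < (n:ℤ) →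
            (![Real.cos (2*Real.pi*(i:ℝ)/n), Real.sin (2*Real.pi*(i:ℝ)/n), 0] : V3) ∈ S := by
          intro i hi0 hi1
          have hm := hmem _ ⟨i, 0, hi0, hi1, rfl⟩
          simp only at hm
          rw [orbit_e1] at hm
          have he : 2*Real.pi*(i:ℝ)/n + θ₀*((0:ℤ):ℝ) = 2*Real.pi*(i:ℝ)/n := by push_cast; ring
          rw [he] at hm
          convert hm using 2
          push_cast; ring
        have hq1 : (![Real.cos θ₀, Real.sin θ₀, τ₀] : V3) ∈ S := by
          have hm := hmem _ ⟨0, 1, le_refl 0, by exact_mod_cast hn, rfl⟩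
          simp only at hm
          rw [orbit_e1] at hm
          have he : 2*Real.pi*((0:ℤ):ℝ)/n + θ₀*((1:ℤ):ℝ) = θ₀ := by push_cast; ring
          rw [he] at hm
          convert hm using 2
          push_cast; ring
        have hp0 : (![1,0,0] : V3) ∈ S := by
          have := hqA 0 (le_refl 0) (by exact_mod_cast hn)
          have he : 2*Real.pi*((0:ℤ):ℝ)/n = 0 := by push_cast; ring
          rw [he] at this
          simpa using this
        have hpa : (![Real.cos a, Real.sin a, 0] : V3) ∈ S := by
          have := hqA 1 (by norm_num) (by exact_mod_cast hn3.trans_lt' (by norm_num))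
          have he : 2*Real.pi*((1:ℤ):ℝ)/n = a := by rw [ha]; push_cast; ring
          rwa [he] at this
        have hp2a : (![Real.cos (2*a), Real.sin (2*a), 0] : V3) ∈ S := by
          have := hqA 2 (by norm_num) (by exact_mod_cast (by omega : 2 < n))
          have he : 2*Real.pi*((2:ℤ):ℝ)/n = 2*a := by rw [ha]; push_cast; ring
          rwa [he] at this
        -- linear independence
        have hapos : 0 < a := by rw [ha]; positivity
        have haltpi : a < Real.pi := by
          rw [ha, div_lt_iff₀ hnR]
          nlinarith
        have hsa : 0 < Real.sin a := Real.sin_pos_of_pos_of_lt_pi hapos haltpi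
        have hca : Real.cos a < 1 := by
          rcases lt_or_eq_of_le (Real.cos_le_one a) with h | h
          · exact h
          · exfalso
            rw [Real.cos_eq_one_iff_of_lt_of_lt (by linarith) (by linarith)] at h
            linarith
        refine not_flat hS
          ![![Real.cos a - 1, Real.sin a, 0],
            ![Real.cos (2*a) - 1, Real.sin (2*a), 0],
            ![Real.cos θ₀ - 1, Real.sin θ₀, τ₀]] hp0 ?_ ?_
        · intro l
          fin_cases l
          · convert hpa using 1
            funext w; fin_cases w <;> simp
          · convert hp2a using 1
            funext w; fin_cases w <;> simp
          · convert hq1 using 1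
            funext w; fin_cases w <;> simp
        · have hdet : (Matrix.of
              ![![Real.cos a - 1, Real.sin a, 0],
                ![Real.cos (2*a) - 1, Real.sin (2*a), 0],
                ![Real.cos θ₀ - 1, Real.sin θ₀, τ₀]]).det
              = 2*τ₀*Real.sin a*(1 - Real.cos a) := by
            simp [Matrix.det_fin_three, Real.cos_two_mul, Real.sin_two_mul]
            ring
          rw [hdet]
          exact mul_ne_zero (mul_ne_zero (mul_ne_zero two_ne_zero hτ₀) (ne_of_gt hsa))
            (ne_of_gt (by linarith))
      · -- θ₀ ∉ {0, π}
        push_neg at hθ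
        have hθpos : 0 < θ₀ := lt_of_le_of_ne hθ₀.1 (Ne.symm hθ.1)
        have hq : ∀ j : ℤ,
            (![Real.cos (θ₀*(j:ℝ)), Real.sin (θ₀*(j:ℝ)), τ₀*(j:ℝ)] : V3) ∈ S := by
          intro j
          have hm := hmem _ ⟨0, j, le_refl 0, by exact_mod_cast hn, rfl⟩
          simp only at hm
          rw [orbit_e1] at hm
          have he : 2*Real.pi*((0:ℤ):ℝ)/n + θ₀*(j:ℝ) = θ₀*(j:ℝ) := by push_cast; ring
          rwa [he] at hm
        have hp0 : (![1,0,0] : V3) ∈ S := by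
          have h0 := hq 0
          simpa only [Int.cast_zero, mul_zero, Real.cos_zero, Real.sin_zero] using h0
        have hq1 : (![Real.cos θ₀, Real.sin θ₀, τ₀] : V3) ∈ S := by
          have := hq 1; simpa using this
        have hq2 : (![Real.cos (2*θ₀), Real.sin (2*θ₀), 2*τ₀] : V3) ∈ S := by
          have := hq 2
          have he : θ₀*((2:ℤ):ℝ) = 2*θ₀ := by push_cast; ring
          have he2 : τ₀*((2:ℤ):ℝ) = 2*τ₀ := by push_cast; ring
          rwa [he, he2] at this
        have hqm1 : (![Real.cos θ₀, -Real.sin θ₀, -τ₀] : V3) ∈ S := by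
          have := hq (-1)
          have he : θ₀*(((-1):ℤ):ℝ) = -θ₀ := by push_cast; ring
          have he2 : τ₀*(((-1):ℤ):ℝ) = -τ₀ := by push_cast; ring
          rw [he, he2, Real.cos_neg, Real.sin_neg] at this
          exact this
        have hc : Real.cos θ₀ ≠ 1 := by
          intro h
          rw [Real.cos_eq_one_iff_of_lt_of_lt (by linarith) hθ₀.2] at h
          exact hθ.1 h
        have hs : Real.sin θ₀ ≠ 0 := by
          intro h
          obtain ⟨k, hk⟩ := Real.sin_eq_zero_iff.1 h
          have hkval : (k:ℝ) = θ₀ / Real.pi := by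
            rw [eq_div_iff (ne_of_gt hπ)]; linarith
          have h0 : (0:ℝ) < (k:ℝ) := by
            rw [hkval]; positivity
          have h2 : ((k:ℝ)) < 2 := by
            rw [hkval, div_lt_iff₀ hπ]; linarith [hθ₀.2]
          have : k = 1 := by
            have h0' : (0:ℤ) < k := by exact_mod_cast h0
            have h2' : k < 2 := by exact_mod_cast h2
            omega
          rw [this] at hk
          push_cast at hk
          exact hθ.2 (by linarith)
        refine not_flat hS
          ![![Real.cos θ₀ - 1, Real.sin θ₀, τ₀],
            ![Real.cos (2*θ₀) - 1, Real.sin (2*θ₀), 2*τ₀],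
            ![Real.cos θ₀ - 1, -Real.sin θ₀, -τ₀]] hp0 ?_ ?_
        · intro l
          fin_cases l
          · convert hq1 using 1
            funext w; fin_cases w <;> simp
          · convert hq2 using 1
            funext w; fin_cases w <;> simp
          · convert hqm1 using 1
            funext w; fin_cases w <;> simp
        · have hdet : (Matrix.of
              ![![Real.cos θ₀ - 1, Real.sin θ₀, τ₀],
                ![Real.cos (2*θ₀) - 1, Real.sin (2*θ₀), 2*τ₀],
                ![Real.cos θ₀ - 1, -Real.sin θ₀, -τ₀]]).det
              = -4*(Real.cos θ₀ - 1)^2*Real.sin θ₀*τ₀ := by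
            simp [Matrix.det_fin_three, Real.cos_two_mul, Real.sin_two_mul]
            ring
          rw [hdet]
          have hc' : Real.cos θ₀ - 1 ≠ 0 := sub_ne_zero.mpr hc
          exact mul_ne_zero (mul_ne_zero (mul_ne_zero (by norm_num) (pow_ne_zero 2 hc')) hs) hτ₀
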